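/- For real numbers c₁, c₂ > 0, weights w_j ≥ 0 (j in a finite index set J, not all zero), and an index j₀ ∈ J, the map y defined on strictly positive vectors x = (x_j)_{j∈J} by y(x) = c₁ / ( c₂ + Σ_{j ≠ j₀} w_j x_j ) is a contraction with respect to the max-log-ratio metric d restricted to sets where d-distances are bounded: specifically, for all strictly positive x, x̃ with max_j x̃_j/x_j ≤ L and max_j x_j/x̃_j ≤ L, one has |log( y(x)/y(x̃) )| ≤ α(L, c₂, w, x) · d(x, x̃) for some α < 1 depending on c₂ > 0, the weights, L, and a lower bound on the entries of x. -/

import Mathlib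

lemma key_mono (c₂ M : ℝ) (hc₂ : 0 < c₂) (hM : 0 < M) :
    MonotoneOn (fun t => (M / (c₂ + M)) * t - Real.log (c₂ + Real.exp t))
      (Set.Iic (Real.log M)) := by
  set α := M / (c₂ + M) with hα
  have hderiv : ∀ t : ℝ, HasDerivAt (fun t => α * t - Real.log (c₂ + Real.exp t))
      (α - Real.exp t / (c₂ + Real.exp t)) t := by
    intro t
    have h1 : HasDerivAt (fun t => c₂ + Real.exp t) (Real.exp t) t :=
      (Real.hasDerivAt_exp t).const_add c₂
    have hne : c₂ + Real.exp t ≠ 0 := by positivity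
    have h2 := h1.log hne
    have h3 : HasDerivAt (fun t : ℝ => α * t) (α * 1) t :=
      (hasDerivAt_id t).const_mul α
    have h4 := h3.sub h2
    simp only [mul_one] at h4
    exact h4
  apply monotoneOn_of_deriv_nonneg (convex_Iic _)
  · exact fun t _ => ((hderiv t).differentiableAt).continuousAt.continuousWithinAt
  · exact fun t _ => ((hderiv t).differentiableAt).differentiableWithinAt
  · intro t ht
    rw [interior_Iic] at ht
    rw [(hderiv t).deriv]
    have het : Real.exp t ≤ M := by
      have := Real.exp_le_exp.mpr (le_of_lt ht)
      rwa [Real.exp_log hM] at this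
    have h1 : Real.exp t / (c₂ + Real.exp t) ≤ M / (c₂ + M) := by
      rw [div_le_div_iff₀ (by positivity) (by positivity)]
      nlinarith [Real.exp_pos t]
    linarith

lemma key_lem (c₂ M : ℝ) (hc₂ : 0 < c₂) (hM : 0 < M) (u v : ℝ)
    (hu : 0 < u) (huM : u ≤ M) (hv : 0 < v) (hvM : v ≤ M) :
    |Real.log (c₂ + u) - Real.log (c₂ + v)| ≤
      (M / (c₂ + M)) * |Real.log u - Real.log v| := by
  have main : ∀ p q : ℝ, 0 < p → p ≤ M → 0 < q → q ≤ M → q ≤ p →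
      Real.log (c₂ + p) - Real.log (c₂ + q) ≤
        (M / (c₂ + M)) * (Real.log p - Real.log q) := by
    intro p q hp hpM hq hqM hqp
    have h1 := key_mono c₂ M hc₂ hM (Set.mem_Iic.mpr (Real.log_le_log hq hqM))
      (Set.mem_Iic.mpr (Real.log_le_log hp hpM)) (Real.log_le_log hq hqp)
    simp only [Real.exp_log hp, Real.exp_log hq] at h1
    nlinarith
  rcases le_total v u with h | h
  · rw [abs_of_nonneg (sub_nonneg.mpr (Real.log_le_log hv h)),
      abs_of_nonneg (sub_nonneg.mpr (Real.log_le_log (by positivity) (by linarith)))]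
    exact main u v hu huM hv hvM h
  · rw [abs_sub_comm, abs_sub_comm (Real.log u),
      abs_of_nonneg (sub_nonneg.mpr (Real.log_le_log hu h)),
      abs_of_nonneg (sub_nonneg.mpr (Real.log_le_log (by positivity) (by linarith)))]
    exact main v u hv hvM hu huM h

theorem stmt_18 {J : Type*} [Fintype J] [Nonempty J] [DecidableEq J]
    (c₁ c₂ : ℝ) (hc₁ : 0 < c₁) (hc₂ : 0 < c₂)
    (w : J → ℝ) (hw : ∀ j, 0 ≤ w j) (hw' : ∃ j, 0 < w j)
    (j₀ : J) (a b : ℝ) (ha : 0 < a) (hab : a ≤ b) :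
    ∃ α : ℝ, 0 ≤ α ∧ α < 1 ∧
      ∀ x xt : J → ℝ, (∀ j, x j ∈ Set.Icc a b) → (∀ j, xt j ∈ Set.Icc a b) →
        |Real.log ((c₁ / (c₂ + ∑ j ∈ Finset.univ.erase j₀, w j * x j)) /
            (c₁ / (c₂ + ∑ j ∈ Finset.univ.erase j₀, w j * xt j)))|
          ≤ α * Finset.univ.sup' Finset.univ_nonempty
              (fun j => |Real.log (x j / xt j)|) := by
  classical
  set W : ℝ := ∑ j ∈ Finset.univ.erase j₀, w j with hW
  have hW0 : 0 ≤ W := Finset.sum_nonneg fun j _ => hw j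
  set M : ℝ := W * b with hM
  have hb : 0 < b := lt_of_lt_of_le ha hab
  have hM0 : 0 ≤ M := mul_nonneg hW0 hb.le
  refine ⟨M / (c₂ + M), by positivity, ?_, ?_⟩
  · rw [div_lt_one (by positivity)]; linarith
  intro x xt hx hxt
  set D : ℝ := Finset.univ.sup' Finset.univ_nonempty
      (fun j => |Real.log (x j / xt j)|) with hD
  have hDnn : 0 ≤ D := by
    obtain ⟨j⟩ := (inferInstance : Nonempty J)
    exact le_trans (abs_nonneg (Real.log (x j / xt j)))
      (Finset.le_sup' (fun j => |Real.log (x j / xt j)|) (Finset.mem_univ j))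
  set S : ℝ := ∑ j ∈ Finset.univ.erase j₀, w j * x j with hS
  set St : ℝ := ∑ j ∈ Finset.univ.erase j₀, w j * xt j with hSt
  have hS0 : 0 ≤ S := Finset.sum_nonneg fun j _ =>
    mul_nonneg (hw j) (le_trans ha.le (hx j).1)
  have hSt0 : 0 ≤ St := Finset.sum_nonneg fun j _ =>
    mul_nonneg (hw j) (le_trans ha.le (hxt j).1)
  have hlog : Real.log ((c₁ / (c₂ + S)) / (c₁ / (c₂ + St)))
      = Real.log (c₂ + St) - Real.log (c₂ + S) := by
    rw [Real.log_div (by positivity) (by positivity),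
      Real.log_div (ne_of_gt hc₁) (by positivity),
      Real.log_div (ne_of_gt hc₁) (by positivity)]
    ring
  rw [hlog]
  rcases eq_or_lt_of_le hW0 with hWz | hWpos
  · -- W = 0 : all weights on erase are zero
    have hz : ∀ j ∈ Finset.univ.erase j₀, w j = 0 := by
      intro j hj
      have := (Finset.sum_eq_zero_iff_of_nonneg (fun j _ => hw j)).mp hWz.symm
      exact this j hj
    have hSz : S = 0 := Finset.sum_eq_zero fun j hj => by rw [hz j hj, zero_mul]
    have hStz : St = 0 := Finset.sum_eq_zero fun j hj => by rw [hz j hj, zero_mul]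
    rw [hSz, hStz]
    simp only [sub_self, abs_zero]
    positivity
  · -- W > 0
    have hMpos : 0 < M := mul_pos hWpos hb
    have hSa : W * a ≤ S := by
      rw [hW, Finset.sum_mul]
      exact Finset.sum_le_sum fun j _ => mul_le_mul_of_nonneg_left (hx j).1 (hw j)
    have hSb : S ≤ M := by
      rw [hM, hW, Finset.sum_mul]
      exact Finset.sum_le_sum fun j _ => mul_le_mul_of_nonneg_left (hx j).2 (hw j)
    have hSta : W * a ≤ St := by
      rw [hW, Finset.sum_mul]
      exact Finset.sum_le_sum fun j _ => mul_le_mul_of_nonneg_left (hxt j).1 (hw j)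
    have hStb : St ≤ M := by
      rw [hM, hW, Finset.sum_mul]
      exact Finset.sum_le_sum fun j _ => mul_le_mul_of_nonneg_left (hxt j).2 (hw j)
    have hSpos : 0 < S := lt_of_lt_of_le (by positivity) hSa
    have hStpos : 0 < St := lt_of_lt_of_le (by positivity) hSta
    have key := key_lem c₂ M hc₂ hMpos St S hStpos hStb hSpos hSb
    refine le_trans key (mul_le_mul_of_nonneg_left ?_ (by positivity))
    -- |log St - log S| ≤ D
    have hbdd : ∀ j, |Real.log (x j / xt j)| ≤ D :=
      fun j => Finset.le_sup' (fun j => |Real.log (x j / xt j)|) (Finset.mem_univ j)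
    have hxle : ∀ j, x j ≤ Real.exp D * xt j := by
      intro j
      have hxj : 0 < x j := lt_of_lt_of_le ha (hx j).1
      have hxtj : 0 < xt j := lt_of_lt_of_le ha (hxt j).1
      have h1 : Real.log (x j / xt j) ≤ D := le_trans (le_abs_self _) (hbdd j)
      have := Real.exp_le_exp.mpr h1
      rw [Real.exp_log (by positivity)] at this
      calc x j = (x j / xt j) * xt j := by field_simp
        _ ≤ Real.exp D * xt j := mul_le_mul_of_nonneg_right this hxtj.le
    have hxtle : ∀ j, xt j ≤ Real.exp D * x j := by
      intro j
      have hxj : 0 < x j := lt_of_lt_of_le ha (hx j).1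
      have hxtj : 0 < xt j := lt_of_lt_of_le ha (hxt j).1
      have h1 : -(Real.log (x j / xt j)) ≤ D := le_trans (neg_le_abs _) (hbdd j)
      rw [← Real.log_inv, inv_div] at h1
      have := Real.exp_le_exp.mpr h1
      rw [Real.exp_log (by positivity)] at this
      calc xt j = (xt j / x j) * x j := by field_simp
        _ ≤ Real.exp D * x j := mul_le_mul_of_nonneg_right this hxj.le
    have hSle : S ≤ Real.exp D * St := by
      rw [hS, hSt, Finset.mul_sum]
      refine Finset.sum_le_sum fun j _ => ?_
      calc w j * x j ≤ w j * (Real.exp D * xt j) :=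
            mul_le_mul_of_nonneg_left (hxle j) (hw j)
        _ = Real.exp D * (w j * xt j) := by ring
    have hStle : St ≤ Real.exp D * S := by
      rw [hS, hSt, Finset.mul_sum]
      refine Finset.sum_le_sum fun j _ => ?_
      calc w j * xt j ≤ w j * (Real.exp D * x j) :=
            mul_le_mul_of_nonneg_left (hxtle j) (hw j)
        _ = Real.exp D * (w j * x j) := by ring
    rw [abs_sub_le_iff]
    constructor
    · have := Real.log_le_log hStpos hStle
      rw [Real.log_mul (by positivity) (ne_of_gt hSpos), Real.log_exp] at this
      linarith
    · have := Real.log_le_log hSpos hSle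
      rw [Real.log_mul (by positivity) (ne_of_gt hStpos), Real.log_exp] at this
      linarith
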